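/- Let M and M̃ be two finite-horizon MDPs identical except for their transition kernels P and P̃, and let π be any Markov policy. Then ‖μ^π_{M̃} − μ^π_M‖₁ ≤ H · Σ_{h=1}^{H−1} Σ_{s,a} μ^π_{M,h}(s,a) ‖P̃_h(·|s,a) − P_h(·|s,a)‖₁. -/
import Mathlib


open Finset

def IsPolicy {S A : Type*} [Fintype A] (π : ℕ → S → A → ℝ) : Prop :=
  ∀ h s, (∀ a, 0 ≤ π h s a) ∧ ∑ a, π h s a = 1

def IsKernel {S A : Type*} [Fintype S] (P : ℕ → S → A → S → ℝ) : Prop :=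
  ∀ h s a, (∀ s', 0 ≤ P h s a s') ∧ ∑ s', P h s a s' = 1

def IsProb {S : Type*} [Fintype S] (μ₁ : S → ℝ) : Prop :=
  (∀ s, 0 ≤ μ₁ s) ∧ ∑ s, μ₁ s = 1

noncomputable def occ {S A : Type*} [Fintype S] [Fintype A] (μ₁ : S → ℝ)
    (P : ℕ → S → A → S → ℝ) (π : ℕ → S → A → ℝ) : ℕ → S → A → ℝ
  | 0 => fun s a => μ₁ s * π 0 s a
  | (h+1) => fun s a => π (h+1) s a * ∑ s', ∑ a', P h s' a' s * occ μ₁ P π h s' a'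


/-- for two MDPs differing only in their transition kernels,
`‖μ^π_{M̃} − μ^π_M‖₁ ≤ H · Σ_{h=1}^{H−1} Σ_{s,a} μ^π_{M,h}(s,a) ‖P̃_h(·|s,a) − P_h(·|s,a)‖₁`. -/
theorem stmt2 {S A : Type*} [Fintype S] [Fintype A]
    (H : ℕ) (μ₁ : S → ℝ) (hμ₁ : IsProb μ₁)
    (P Pt : ℕ → S → A → S → ℝ) (hP : IsKernel P) (hPt : IsKernel Pt)
    (π : ℕ → S → A → ℝ) (hπ : IsPolicy π) :
    ∑ h ∈ Finset.range H, ∑ s, ∑ a, |occ μ₁ Pt π h s a - occ μ₁ P π h s a| ≤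
      (H : ℝ) * ∑ h ∈ Finset.range (H - 1), ∑ s, ∑ a,
        occ μ₁ P π h s a * (∑ s', |Pt h s a s' - P h s a s'|) := by
  have hocc : ∀ (Q : ℕ → S → A → S → ℝ), IsKernel Q →
      ∀ h s a, 0 ≤ occ μ₁ Q π h s a := by
    intro Q hQ h
    induction h with
    | zero => intro s a; exact mul_nonneg (hμ₁.1 s) ((hπ 0 s).1 a)
    | succ h ih =>
      intro s a
      exact mul_nonneg ((hπ _ s).1 a) (Finset.sum_nonneg fun s' _ =>
        Finset.sum_nonneg fun a' _ => mul_nonneg ((hQ h s' a').1 s) (ih s' a'))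
  set e : ℕ → ℝ := fun h => ∑ s, ∑ a, |occ μ₁ Pt π h s a - occ μ₁ P π h s a| with he
  set d : ℕ → ℝ := fun h => ∑ s, ∑ a,
      occ μ₁ P π h s a * (∑ s', |Pt h s a s' - P h s a s'|) with hd
  have hd0 : ∀ h, 0 ≤ d h := by
    intro h
    exact Finset.sum_nonneg fun s _ => Finset.sum_nonneg fun a _ =>
      mul_nonneg (hocc P hP h s a)
        (Finset.sum_nonneg fun s' _ => abs_nonneg _)
  have he0 : e 0 = 0 := by simp [he, occ]
  have step : ∀ h, e (h + 1) ≤ e h + d h := by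
    intro h
    have key : ∀ s, ∑ a, |occ μ₁ Pt π (h+1) s a - occ μ₁ P π (h+1) s a| ≤
        ∑ s', ∑ a', (Pt h s' a' s * |occ μ₁ Pt π h s' a' - occ μ₁ P π h s' a'|
          + |Pt h s' a' s - P h s' a' s| * occ μ₁ P π h s' a') := by
      intro s
      have hb : ∀ a : A, |occ μ₁ Pt π (h+1) s a - occ μ₁ P π (h+1) s a| ≤
          π (h+1) s a * ∑ s', ∑ a',
            (Pt h s' a' s * |occ μ₁ Pt π h s' a' - occ μ₁ P π h s' a'|
            + |Pt h s' a' s - P h s' a' s| * occ μ₁ P π h s' a') := by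
        intro a
        show |π (h+1) s a * (∑ s', ∑ a', Pt h s' a' s * occ μ₁ Pt π h s' a')
            - π (h+1) s a * (∑ s', ∑ a', P h s' a' s * occ μ₁ P π h s' a')| ≤ _
        rw [← mul_sub, abs_mul, abs_of_nonneg ((hπ (h+1) s).1 a)]
        apply mul_le_mul_of_nonneg_left _ ((hπ (h+1) s).1 a)
        rw [← Finset.sum_sub_distrib]
        refine (Finset.abs_sum_le_sum_abs _ _).trans (Finset.sum_le_sum fun s' _ => ?_)
        rw [← Finset.sum_sub_distrib]
        refine (Finset.abs_sum_le_sum_abs _ _).trans (Finset.sum_le_sum fun a' _ => ?_)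
        have : Pt h s' a' s * occ μ₁ Pt π h s' a' - P h s' a' s * occ μ₁ P π h s' a'
            = Pt h s' a' s * (occ μ₁ Pt π h s' a' - occ μ₁ P π h s' a')
              + (Pt h s' a' s - P h s' a' s) * occ μ₁ P π h s' a' := by ring
        rw [this]
        refine (abs_add_le _ _).trans ?_
        rw [abs_mul, abs_mul, abs_of_nonneg ((hPt h s' a').1 s),
          abs_of_nonneg (hocc P hP h s' a')]
      calc ∑ a, |occ μ₁ Pt π (h+1) s a - occ μ₁ P π (h+1) s a|
          ≤ ∑ a, π (h+1) s a * ∑ s', ∑ a',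
            (Pt h s' a' s * |occ μ₁ Pt π h s' a' - occ μ₁ P π h s' a'|
            + |Pt h s' a' s - P h s' a' s| * occ μ₁ P π h s' a') :=
            Finset.sum_le_sum fun a _ => hb a
        _ = _ := by rw [← Finset.sum_mul, (hπ (h+1) s).2, one_mul]
    calc e (h+1) ≤ ∑ s : S, ∑ s', ∑ a',
          (Pt h s' a' s * |occ μ₁ Pt π h s' a' - occ μ₁ P π h s' a'|
          + |Pt h s' a' s - P h s' a' s| * occ μ₁ P π h s' a') :=
        Finset.sum_le_sum fun s _ => key s
      _ = e h + d h := by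
        rw [Finset.sum_comm]
        simp only [he, hd]
        rw [← Finset.sum_add_distrib]
        refine Finset.sum_congr rfl fun s' _ => ?_
        rw [Finset.sum_comm, ← Finset.sum_add_distrib]
        refine Finset.sum_congr rfl fun a' _ => ?_
        rw [Finset.sum_add_distrib, ← Finset.sum_mul, (hPt h s' a').2, one_mul,
          ← Finset.sum_mul]
        ring
  have ebound : ∀ h, e h ≤ ∑ k ∈ Finset.range h, d k := by
    intro h
    induction h with
    | zero => simp [he0]
    | succ h ih =>
      calc e (h+1) ≤ e h + d h := step h
        _ ≤ (∑ k ∈ Finset.range h, d k) + d h := by linarith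
        _ = ∑ k ∈ Finset.range (h+1), d k := (Finset.sum_range_succ d h).symm
  calc ∑ h ∈ Finset.range H, e h
      ≤ ∑ h ∈ Finset.range H, ∑ k ∈ Finset.range (H-1), d k := by
        refine Finset.sum_le_sum fun h hh => ?_
        refine (ebound h).trans ?_
        refine Finset.sum_le_sum_of_subset_of_nonneg
          (Finset.range_subset_range.mpr (Nat.le_sub_one_of_lt (Finset.mem_range.mp hh)))
          fun k _ _ => hd0 k
    _ = (H : ℝ) * ∑ k ∈ Finset.range (H-1), d k := by
        rw [Finset.sum_const, Finset.card_range, nsmul_eq_mul]
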